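/- Let n ≥ 1, let D = diag(d₁,…,dₙ) with all dᵢ > 0, let L^D be a real symmetric n×n matrix with an orthonormal eigenbasis u₁,…,uₙ ∈ ℝⁿ and corresponding eigenvalues λ₁,…,λₙ, let γ > 0 with λ_α ≠ γ/4 for every α, and let δP : ℝ → ℝⁿ be continuous. For each α set Γ_α ∈ ℂ with Γ_α² = γ² − 4λ_α γ, f_α(t) = (D^{−1/2} δP(t))ᵀ u_α, and c_α(t) = γ e^{−(γ+Γ_α)t/2} ∫₀ᵗ e^{Γ_α t₁} ( ∫₀^{t₁} f_α(t₂) e^{(γ−Γ_α)t₂/2} dt₂ ) dt₁. Then δφ(t) = Σ_α c_α(t) u_α (a ℂⁿ-valued function) satisfies γ⁻¹ δφ̈(t) + δφ̇(t) = D^{−1/2} δP(t) − L^D δφ(t) for all t ≥ 0, with δφ(0) = 0 and δφ̇(0) = 0. -/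

import Mathlib

open MeasureTheory intervalIntegral

lemma cexp_deriv_aux (a : ℂ) (t : ℝ) :
    HasDerivAt (fun s : ℝ => Complex.exp (a * s)) (a * Complex.exp (a * t)) t := by
  have h : HasDerivAt (fun z : ℂ => Complex.exp (a * z)) (a * Complex.exp (a * t)) (t : ℂ) := by
    simpa [mul_comm] using ((hasDerivAt_id ((t : ℂ))).const_mul a).cexp
  exact h.comp_ofReal

lemma mode_sol_aux (γ lam : ℝ) (hγ : 0 < γ) (Γ : ℂ)
    (hΓ : Γ ^ 2 = (γ : ℂ) ^ 2 - 4 * (lam : ℂ) * (γ : ℂ))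
    (f : ℝ → ℝ) (hf : Continuous f) (c : ℝ → ℂ)
    (hc : ∀ t : ℝ, c t =
      (γ : ℂ) * Complex.exp (-((γ : ℂ) + Γ) * (t : ℂ) / 2) *
        ∫ t₁ in (0 : ℝ)..t, Complex.exp (Γ * (t₁ : ℂ)) *
          ∫ t₂ in (0 : ℝ)..t₁, (f t₂ : ℂ) * Complex.exp (((γ : ℂ) - Γ) * (t₂ : ℂ) / 2)) :
    ∃ c1 c2 : ℝ → ℂ,
      (∀ t, HasDerivAt c (c1 t) t) ∧ (∀ t, HasDerivAt c1 (c2 t) t) ∧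
      (∀ t, (γ : ℂ)⁻¹ * c2 t + c1 t = (f t : ℂ) - (lam : ℂ) * c t) ∧
      c 0 = 0 ∧ c1 0 = 0 := by
  have hγ' : (γ : ℂ) ≠ 0 := by exact_mod_cast hγ.ne'
  set k : ℂ := -((γ : ℂ) + Γ) / 2 with hk
  set F : ℝ → ℂ := fun s => (f s : ℂ) * Complex.exp (((γ : ℂ) - Γ) * (s : ℂ) / 2) with hF
  have hFc : Continuous F := by
    apply (Complex.continuous_ofReal.comp hf).mul
    apply Complex.continuous_exp.comp
    exact (continuous_const.mul Complex.continuous_ofReal).div_const 2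
  set g : ℝ → ℂ := fun t => ∫ s in (0:ℝ)..t, F s with hgdef
  have hg : ∀ t, HasDerivAt g (F t) t := fun t =>
    intervalIntegral.integral_hasDerivAt_right (hFc.intervalIntegrable 0 t)
      (hFc.stronglyMeasurableAtFilter _ _) hFc.continuousAt
  have hgc : Continuous g := by
    have : Differentiable ℝ g := fun t => (hg t).differentiableAt
    exact this.continuous
  set e2 : ℝ → ℂ := fun s => Complex.exp (Γ * (s : ℂ)) with he2
  set G : ℝ → ℂ := fun s => e2 s * g s with hGdef
  have hGc : Continuous G := ((Complex.continuous_exp.comp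
    (continuous_const.mul Complex.continuous_ofReal))).mul hgc
  set H : ℝ → ℂ := fun t => ∫ s in (0:ℝ)..t, G s with hHdef
  have hH : ∀ t, HasDerivAt H (G t) t := fun t =>
    intervalIntegral.integral_hasDerivAt_right (hGc.intervalIntegrable 0 t)
      (hGc.stronglyMeasurableAtFilter _ _) hGc.continuousAt
  set E : ℝ → ℂ := fun t => Complex.exp (-((γ : ℂ) + Γ) * (t : ℂ) / 2) with hE
  have hEd : ∀ t, HasDerivAt E (k * E t) t := by
    intro t
    have := cexp_deriv_aux k t
    convert this using 2 with s
    · simp only [hE]; congr 1; rw [hk]; ring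
    · simp only [hE]; congr 1; rw [hk]; ring
  have hE2d : ∀ t, HasDerivAt e2 (Γ * e2 t) t := fun t => cexp_deriv_aux Γ t
  have hGd : ∀ t, HasDerivAt G (Γ * e2 t * g t + e2 t * F t) t := fun t =>
    (hE2d t).mul (hg t)
  have hceq : c = fun t => (γ : ℂ) * E t * H t := funext fun t => hc t
  refine ⟨fun t => (γ : ℂ) * (k * E t) * H t + (γ : ℂ) * E t * G t,
    fun t => ((γ : ℂ) * (k * (k * E t)) * H t + (γ : ℂ) * (k * E t) * G t)
      + ((γ : ℂ) * (k * E t) * G t + (γ : ℂ) * E t * (Γ * e2 t * g t + e2 t * F t)),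
    ?_, ?_, ?_, ?_, ?_⟩
  · intro t
    rw [hceq]
    exact (((hEd t).const_mul (γ : ℂ)).mul (hH t))
  · intro t
    exact ((((hEd t).const_mul k).const_mul (γ : ℂ)).mul (hH t)).add
      (((hEd t).const_mul (γ : ℂ)).mul (hGd t))
  · intro t
    rw [hceq]
    have h1 : E t * e2 t * Complex.exp (((γ : ℂ) - Γ) * (t : ℂ) / 2) = 1 := by
      rw [hE, he2, ← Complex.exp_add, ← Complex.exp_add]
      rw [show -((γ : ℂ) + Γ) * (t : ℂ) / 2 + Γ * (t : ℂ) + ((γ : ℂ) - Γ) * (t : ℂ) / 2 = 0 by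
        ring]
      exact Complex.exp_zero
    simp only [hF, hGdef]
    field_simp
    linear_combination (E t * H t / 4) * hΓ + ((f t : ℂ)) * h1
  · rw [hceq]; simp [hHdef]
  · simp [hHdef, hGdef, hgdef]

/-- Proposition 1 of the paper.
With `L^D` a real symmetric `n×n` matrix with orthonormal eigenbasis `u_α` and
eigenvalues `λ_α`, constant damping-to-inertia ratio `γ > 0` (`λ_α ≠ γ/4`),
continuous disturbance `δP`, per-mode forcing `f_α = (D^{-1/2} δP)ᵀ u_α`, and
mode coefficients `c_α` given by the iterated-integral formula, the function
`δφ(t) = Σ_α c_α(t) u_α` (ℂⁿ-valued) solves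
`γ⁻¹ δφ̈ + δφ̇ = D^{-1/2} δP − L^D δφ` for `t ≥ 0`, with `δφ(0) = 0`, `δφ̇(0) = 0`. -/
theorem prop1_general_solution
    (n : ℕ) (hn : 1 ≤ n) (d : Fin n → ℝ) (hd : ∀ i, 0 < d i)
    (L : Matrix (Fin n) (Fin n) ℝ) (hLsymm : L.IsSymm)
    (u : Fin n → Fin n → ℝ) (lam : Fin n → ℝ)
    (heig : ∀ α, L.mulVec (u α) = lam α • u α)
    (horth : ∀ α β, (∑ i, u α i * u β i) = if α = β then (1 : ℝ) else 0)
    (γ : ℝ) (hγ : 0 < γ) (hlam : ∀ α, lam α ≠ γ / 4)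
    (δP : ℝ → Fin n → ℝ) (hδP : Continuous δP)
    (Γ : Fin n → ℂ)
    (hΓ : ∀ α, (Γ α) ^ 2 = (γ : ℂ) ^ 2 - 4 * (lam α : ℂ) * (γ : ℂ))
    (f : Fin n → ℝ → ℝ)
    (hf : ∀ α t, f α t = ∑ i, δP t i / Real.sqrt (d i) * u α i)
    (c : Fin n → ℝ → ℂ)
    (hc : ∀ α (t : ℝ), c α t =
      (γ : ℂ) * Complex.exp (-((γ : ℂ) + Γ α) * (t : ℂ) / 2) *
        ∫ t₁ in (0 : ℝ)..t, Complex.exp (Γ α * (t₁ : ℂ)) *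
          ∫ t₂ in (0 : ℝ)..t₁, (f α t₂ : ℂ) * Complex.exp (((γ : ℂ) - Γ α) * (t₂ : ℂ) / 2))
    (δφ : ℝ → Fin n → ℂ)
    (hδφ : ∀ (t : ℝ) (i : Fin n), δφ t i = ∑ α, c α t * (u α i : ℂ)) :
    (∀ t : ℝ, 0 ≤ t → ∀ i : Fin n,
      (γ : ℂ)⁻¹ * deriv (deriv (fun s => δφ s i)) t + deriv (fun s => δφ s i) t
        = ((δP t i / Real.sqrt (d i) : ℝ) : ℂ)
          - ((L.map ((↑) : ℝ → ℂ)).mulVec (δφ t)) i) ∧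
    (∀ i, δφ 0 i = 0) ∧
    (∀ i, deriv (fun s => δφ s i) 0 = 0) := by
  have hfc : ∀ α, Continuous (f α) := by
    intro α
    have h : f α = fun t => ∑ i, δP t i / Real.sqrt (d i) * u α i := funext (hf α)
    rw [h]
    exact continuous_finset_sum _ fun i _ =>
      (((continuous_apply i).comp hδP).div_const _).mul continuous_const
  choose c1 c2 hd1 hd2 hode hc0 hc10 using fun α =>
    mode_sol_aux γ (lam α) hγ (Γ α) (hΓ α) (f α) (hfc α) (c α) (hc α)
  have hδφi : ∀ i : Fin n, (fun s => δφ s i) = fun s => ∑ α, c α s * (u α i : ℂ) :=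
    fun i => funext fun s => hδφ s i
  have hD1 : ∀ (t : ℝ) (i : Fin n),
      HasDerivAt (fun s => δφ s i) (∑ α, c1 α t * (u α i : ℂ)) t := by
    intro t i
    rw [hδφi i]
    exact HasDerivAt.fun_sum fun α _ => (hd1 α t).mul_const _
  have hderiv1 : ∀ i : Fin n,
      deriv (fun s => δφ s i) = fun t => ∑ α, c1 α t * (u α i : ℂ) :=
    fun i => funext fun t => (hD1 t i).deriv
  have hderiv2 : ∀ (t : ℝ) (i : Fin n),
      deriv (deriv (fun s => δφ s i)) t = ∑ α, c2 α t * (u α i : ℂ) := by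
    intro t i
    rw [hderiv1 i]
    exact (HasDerivAt.fun_sum fun α _ => (hd2 α t).mul_const ((u α i : ℂ))).deriv
  have hcomp : ∀ i j, (∑ α, u α i * u α j) = if i = j then (1:ℝ) else 0 := by
    have hU : (Matrix.of u) * (Matrix.of u).transpose = 1 := by
      ext α β
      simpa [Matrix.mul_apply, Matrix.one_apply] using horth α β
    have hU' : (Matrix.of u).transpose * (Matrix.of u) = 1 := mul_eq_one_comm.mp hU
    intro i j
    have := congrFun (congrFun hU' i) j
    simpa [Matrix.mul_apply, Matrix.one_apply, mul_comm] using this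
  refine ⟨?_, ?_, ?_⟩
  · intro t _ i
    rw [hderiv2 t i, hderiv1 i]
    have lhs_eq : (γ:ℂ)⁻¹ * (∑ α, c2 α t * (u α i:ℂ)) + (∑ α, c1 α t * (u α i:ℂ))
        = ∑ α, ((γ:ℂ)⁻¹ * c2 α t + c1 α t) * (u α i:ℂ) := by
      rw [Finset.mul_sum, ← Finset.sum_add_distrib]
      exact Finset.sum_congr rfl fun α _ => by ring
    rw [lhs_eq,
      Finset.sum_congr rfl fun α (_ : α ∈ Finset.univ) => by rw [hode α t]]
    have hsplit : ∑ α, ((f α t : ℂ) - (lam α:ℂ) * c α t) * (u α i:ℂ)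
        = (∑ α, (f α t : ℂ) * (u α i:ℂ)) - ∑ α, (lam α:ℂ) * c α t * (u α i:ℂ) := by
      rw [← Finset.sum_sub_distrib]
      exact Finset.sum_congr rfl fun α _ => by ring
    rw [hsplit]
    congr 1
    · have hreal : (∑ α, f α t * u α i) = δP t i / Real.sqrt (d i) := by
        simp only [hf, Finset.sum_mul]
        rw [Finset.sum_comm]
        have step : ∀ j, (∑ α, δP t j / Real.sqrt (d j) * u α j * u α i)
            = if j = i then δP t j / Real.sqrt (d j) else 0 := by
          intro j
          simp only [mul_assoc, ← Finset.mul_sum, hcomp j i, mul_ite, mul_one, mul_zero]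
        rw [Finset.sum_congr rfl fun j _ => step j]
        simp
      rw [← hreal]
      push_cast
      ring
    · have heig' : ∀ α, (∑ j, L i j * u α j) = lam α * u α i := fun α => by
        have := congrFun (heig α) i
        simpa [Matrix.mulVec, dotProduct] using this
      have hmv : ((L.map ((↑) : ℝ → ℂ)).mulVec (δφ t)) i
          = ∑ α, (lam α : ℂ) * c α t * (u α i : ℂ) := by
        simp only [Matrix.mulVec, dotProduct, Matrix.map_apply]
        calc ∑ j, (L i j : ℂ) * δφ t j
            = ∑ j, ∑ α, (L i j : ℂ) * (c α t * (u α j : ℂ)) := by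
              simp only [hδφ, Finset.mul_sum]
          _ = ∑ α, ∑ j, (L i j : ℂ) * (c α t * (u α j : ℂ)) := Finset.sum_comm
          _ = ∑ α, (lam α : ℂ) * c α t * (u α i : ℂ) := by
              refine Finset.sum_congr rfl fun α _ => ?_
              have h2 : ∑ j, (L i j : ℂ) * (c α t * (u α j : ℂ))
                  = c α t * ((∑ j, L i j * u α j : ℝ) : ℂ) := by
                push_cast
                rw [Finset.mul_sum]
                exact Finset.sum_congr rfl fun j _ => by ring
              rw [h2, heig' α]
              push_cast
              ring
      rw [hmv]
  · intro i
    simp [hδφ, hc0]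
  · intro i
    rw [hderiv1 i]
    simp [hc10]
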